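/- The smooth function λ*: (-√π, √π) → (-1, 0] defined implicitly by ω(λ*(ξ),ξ) = 0 (with λ*(0)=0), where ω(λ,ξ) = 1 - ∫_ℝ (1+λ)w(v)/((1+λ)²+(vξ)²)dv and w(v)=e^{-v²}/√π, satisfies the singular ODE dλ*/dξ = ξ/(2λ*) + λ*/ξ + 1/ξ for ξ ≠ 0. -/

import Mathlib

open MeasureTheory Real Filter

noncomputable def w (v : ℝ) : ℝ := Real.exp (-v ^ 2) / Real.sqrt Real.pi

noncomputable def omg (l ξ : ℝ) : ℝ :=
  1 - ∫ v : ℝ, (1 + l) * w v / ((1 + l) ^ 2 + (v * ξ) ^ 2)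

noncomputable def Gfn (s : ℝ) : ℝ := ∫ u : ℝ, Real.exp (-(s*u)^2) / (1 + u^2)

lemma sq_rw (s u : ℝ) : Real.exp (-(s*u)^2) = Real.exp (-(s^2) * u^2) := by ring_nf

lemma gauss_int {s : ℝ} (hs : 0 < s) :
    ∫ u : ℝ, Real.exp (-(s*u)^2) = Real.sqrt Real.pi / s := by
  simp_rw [sq_rw, integral_gaussian]
  rw [Real.sqrt_div' _ (by positivity), Real.sqrt_sq hs.le]

lemma gauss_integrable {s : ℝ} (hs : s ≠ 0) :
    Integrable fun u : ℝ => Real.exp (-(s*u)^2) := by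
  simp_rw [sq_rw]
  exact integrable_exp_neg_mul_sq (by positivity)

lemma one_add_sq_pos (u : ℝ) : (0:ℝ) < 1 + u^2 := by positivity

lemma Gfn_integrable {s : ℝ} (hs : s ≠ 0) :
    Integrable fun u : ℝ => Real.exp (-(s*u)^2) / (1 + u^2) := by
  refine (gauss_integrable hs).mono' ?_ ?_
  · apply Measurable.aestronglyMeasurable; fun_prop
  · filter_upwards with u
    rw [Real.norm_eq_abs, abs_of_nonneg (by positivity)]
    rw [div_le_iff₀ (one_add_sq_pos u)]
    nlinarith [Real.exp_pos (-(s*u)^2), sq_nonneg u]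

lemma Gfn_lt {s : ℝ} (hs : 0 < s) : Gfn s < Real.sqrt Real.pi / s := by
  unfold Gfn
  rw [← gauss_int hs]
  have hint := gauss_integrable hs.ne'
  have hint2 := Gfn_integrable hs.ne'
  have hpos : 0 < ∫ u : ℝ, (Real.exp (-(s*u)^2) - Real.exp (-(s*u)^2) / (1 + u^2)) := by
    rw [integral_pos_iff_support_of_nonneg]
    · have hsupp : Function.support (fun u : ℝ => Real.exp (-(s*u)^2) - Real.exp (-(s*u)^2) / (1 + u^2))
          = {0}ᶜ := by
        ext u
        simp only [Function.mem_support, Set.mem_compl_iff, Set.mem_singleton_iff]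
        constructor
        · rintro h rfl; simp at h
        · intro hu h
          have h1 : Real.exp (-(s*u)^2) * (1 - 1/(1+u^2)) = 0 := by
            rw [mul_sub, mul_one, mul_one_div]; exact h
          rcases mul_eq_zero.1 h1 with h2 | h2
          · exact (Real.exp_pos _).ne' h2
          · have hu2 : (0:ℝ) < u^2 := by positivity
            have : 1/(1+u^2) < 1 := by
              rw [div_lt_one (one_add_sq_pos u)]; linarith
            linarith
      rw [hsupp]
      calc (0:ENNReal) < volume (Set.Ioi (0:ℝ)) := by simp [Real.volume_Ioi]
        _ ≤ volume ({(0:ℝ)}ᶜ) := by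
            apply measure_mono
            intro x hx
            simp only [Set.mem_Ioi] at hx
            simp only [Set.mem_compl_iff, Set.mem_singleton_iff]
            exact ne_of_gt hx
    · intro u
      have h1 : Real.exp (-(s*u)^2) / (1 + u^2) ≤ Real.exp (-(s*u)^2) := by
        rw [div_le_iff₀ (one_add_sq_pos u)]
        nlinarith [Real.exp_pos (-(s*u)^2), sq_nonneg u]
      simpa using h1
    · exact hint.sub hint2
  rw [integral_sub hint hint2] at hpos
  linarith

lemma Gfn_hasDeriv {s₀ : ℝ} (hs : 0 < s₀) :
    HasDerivAt Gfn (2*s₀*Gfn s₀ - 2*Real.sqrt Real.pi) s₀ := by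
  have hb : (0:ℝ) < s₀/2 := by linarith
  have key := hasDerivAt_integral_of_dominated_loc_of_deriv_le (μ := volume)
      (F := fun s u => Real.exp (-(s*u)^2) / (1 + u^2))
      (F' := fun s u => (-2*s*u^2) * Real.exp (-(s*u)^2) / (1 + u^2))
      (x₀ := s₀) (bound := fun u => 3*s₀ * Real.exp (-(s₀/2)^2 * u^2))
      (s := Metric.ball s₀ (s₀/2)) (Metric.ball_mem_nhds s₀ hb) ?_ (Gfn_integrable hs.ne') ?_ ?_ ?_ ?_
  · obtain ⟨hint', hder⟩ := key
    have hval : (∫ u : ℝ, (-2*s₀*u^2) * Real.exp (-(s₀*u)^2) / (1 + u^2))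
        = 2*s₀*Gfn s₀ - 2*Real.sqrt Real.pi := by
      have h3 : ∀ u : ℝ, Real.exp (-(s₀*u)^2) - Real.exp (-(s₀*u)^2) / (1 + u^2)
          = u^2 * Real.exp (-(s₀*u)^2) / (1 + u^2) := by
        intro u
        rw [eq_div_iff (one_add_sq_pos u).ne', sub_mul,
          div_mul_cancel₀ _ (one_add_sq_pos u).ne']
        ring
      have heq : ∀ u : ℝ, (-2*s₀*u^2) * Real.exp (-(s₀*u)^2) / (1 + u^2)
          = (-2*s₀) * (Real.exp (-(s₀*u)^2) - Real.exp (-(s₀*u)^2) / (1 + u^2)) := by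
        intro u
        rw [h3 u]
        ring
      simp_rw [heq]
      rw [integral_const_mul, integral_sub (gauss_integrable hs.ne') (Gfn_integrable hs.ne'),
        gauss_int hs]
      unfold Gfn
      field_simp
      ring
    rw [hval] at hder
    exact hder
  · filter_upwards with s
    apply Measurable.aestronglyMeasurable; fun_prop
  · apply Measurable.aestronglyMeasurable; fun_prop
  · filter_upwards with u
    intro s hsball
    rw [Metric.mem_ball, Real.dist_eq, abs_lt] at hsball
    have hs1 : s₀/2 < s := by linarith [hsball.1]
    have hs2 : s < 3*s₀/2 := by linarith [hsball.2]
    have hsp : 0 < s := lt_trans hb hs1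
    have habs : ‖(-2*s*u^2) * Real.exp (-(s*u)^2) / (1 + u^2)‖
        = 2*s*u^2 * Real.exp (-(s*u)^2) / (1 + u^2) := by
      rw [Real.norm_eq_abs, abs_div, abs_of_nonneg (one_add_sq_pos u).le,
        abs_of_nonpos (by nlinarith [(Real.exp_pos (-(s*u)^2)).le, sq_nonneg u] :
          (-2*s*u^2) * Real.exp (-(s*u)^2) ≤ 0)]
      ring
    rw [habs]
    have h1 : Real.exp (-(s*u)^2) ≤ Real.exp (-(s₀/2)^2*u^2) := by
      apply Real.exp_le_exp.2
      nlinarith [mul_nonneg (mul_nonneg (sub_nonneg.2 hs1.le)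
        (by linarith : (0:ℝ) ≤ s + s₀/2)) (sq_nonneg u)]
    have h2 : 2*s*u^2 * Real.exp (-(s*u)^2) / (1 + u^2)
        ≤ 2*s * Real.exp (-(s*u)^2) := by
      rw [div_le_iff₀ (one_add_sq_pos u)]
      have := (Real.exp_pos (-(s*u)^2)).le
      nlinarith [sq_nonneg u, sq_nonneg (u^2)]
    calc 2*s*u^2 * Real.exp (-(s*u)^2) / (1 + u^2)
          ≤ 2*s * Real.exp (-(s*u)^2) := h2
      _ ≤ 3*s₀ * Real.exp (-(s₀/2)^2*u^2) := by
          apply mul_le_mul (by linarith) h1 (Real.exp_pos _).le (by linarith)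
  · have h0 : (0:ℝ) < (s₀/2)^2 := by positivity
    exact (integrable_exp_neg_mul_sq h0).const_mul _
  · filter_upwards with u
    intro s hsball
    have hinner : HasDerivAt (fun s : ℝ => -(s*u)^2) (-(2*(s*u)*u)) s := by
      have h1 : HasDerivAt (fun s : ℝ => s*u) u s := hasDerivAt_mul_const u
      have h2 := (h1.fun_pow 2).fun_neg
      exact h2.congr_deriv (by rw [show (2:ℕ)-1 = 1 from rfl]; push_cast; ring)
    have hexp := hinner.exp
    have hdd := hexp.div_const (1 + u^2)
    exact hdd.congr_deriv (by ring)

lemma cov {a ξ : ℝ} (ha : 0 < a) (hξ : 0 < ξ) :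
    (∫ v : ℝ, a * w v / (a ^ 2 + (v * ξ) ^ 2))
      = Gfn (a/ξ) / (Real.sqrt Real.pi * ξ) := by
  have hπ : (0:ℝ) < Real.sqrt Real.pi := Real.sqrt_pos.2 Real.pi_pos
  have hfun : ∀ v : ℝ,
      a * w v / (a ^ 2 + (v * ξ) ^ 2)
      = (fun u => (Real.exp (-(a/ξ*u)^2) / (1 + u^2)) / (Real.sqrt Real.pi * a)) (ξ/a * v) := by
    intro v
    simp only [w]
    have h1 : (a/ξ * (ξ/a * v)) = v := by field_simp
    rw [h1]
    have h2 : (1 + (ξ/a*v)^2) = (a^2 + (v*ξ)^2)/a^2 := by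
      field_simp
    rw [h2]
    have hD : (0:ℝ) < a^2 + (v*ξ)^2 := by positivity
    rw [div_eq_div_iff (by positivity) (by positivity)]
    field_simp
  calc (∫ v : ℝ, a * w v / (a ^ 2 + (v * ξ) ^ 2))
      = ∫ v : ℝ, (fun u => (Real.exp (-(a/ξ*u)^2) / (1 + u^2)) / (Real.sqrt Real.pi * a)) (ξ/a * v) := by
        exact integral_congr_ae (Filter.Eventually.of_forall hfun)
    _ = |(ξ/a)⁻¹| • ∫ u : ℝ, (Real.exp (-(a/ξ*u)^2) / (1 + u^2)) / (Real.sqrt Real.pi * a) := by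
        exact Measure.integral_comp_mul_left
          (fun u : ℝ => (Real.exp (-(a/ξ*u)^2) / (1 + u^2)) / (Real.sqrt Real.pi * a)) (ξ/a)
    _ = Gfn (a/ξ) / (Real.sqrt Real.pi * ξ) := by
        rw [integral_div]
        unfold Gfn
        rw [abs_of_pos (by positivity : (0:ℝ) < (ξ/a)⁻¹), smul_eq_mul]
        field_simp

lemma Gfn_id (lstar : ℝ → ℝ)
    (hrange : ∀ ξ ∈ Set.Ioo (-Real.sqrt Real.pi) (Real.sqrt Real.pi),
      lstar ξ ∈ Set.Ioc (-1 : ℝ) 0)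
    (hzero : ∀ ξ ∈ Set.Ioo (-Real.sqrt Real.pi) (Real.sqrt Real.pi),
      omg (lstar ξ) ξ = 0) :
    ∀ ξ ∈ Set.Ioo (0:ℝ) (Real.sqrt Real.pi),
      Gfn ((1 + lstar ξ)/ξ) = Real.sqrt Real.pi * ξ := by
  intro ξ hξ
  have hπ : (0:ℝ) < Real.sqrt Real.pi := Real.sqrt_pos.2 Real.pi_pos
  have hmem : ξ ∈ Set.Ioo (-Real.sqrt Real.pi) (Real.sqrt Real.pi) :=
    ⟨by linarith [hξ.1], hξ.2⟩
  have ha : (0:ℝ) < 1 + lstar ξ := by linarith [(hrange ξ hmem).1]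
  have hz := hzero ξ hmem
  unfold omg at hz
  have hint : (∫ v : ℝ, (1 + lstar ξ) * w v / ((1 + lstar ξ) ^ 2 + (v * ξ) ^ 2)) = 1 := by
    linarith
  rw [cov ha hξ.1, div_eq_one_iff_eq (mul_ne_zero hπ.ne' (ne_of_gt hξ.1))] at hint
  exact hint

lemma key_pos (lstar : ℝ → ℝ)
    (hdiff : DifferentiableOn ℝ lstar
      (Set.Ioo (-Real.sqrt Real.pi) (Real.sqrt Real.pi)))
    (hrange : ∀ ξ ∈ Set.Ioo (-Real.sqrt Real.pi) (Real.sqrt Real.pi),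
      lstar ξ ∈ Set.Ioc (-1 : ℝ) 0)
    (hzero : ∀ ξ ∈ Set.Ioo (-Real.sqrt Real.pi) (Real.sqrt Real.pi),
      omg (lstar ξ) ξ = 0) :
    ∀ ξ₀ ∈ Set.Ioo (0:ℝ) (Real.sqrt Real.pi),
      deriv lstar ξ₀ = ξ₀ / (2 * lstar ξ₀) + lstar ξ₀ / ξ₀ + 1 / ξ₀ := by
  intro ξ₀ hξ₀
  have hπ : (0:ℝ) < Real.sqrt Real.pi := Real.sqrt_pos.2 Real.pi_pos
  have hmem : ξ₀ ∈ Set.Ioo (-Real.sqrt Real.pi) (Real.sqrt Real.pi) :=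
    ⟨by linarith [hξ₀.1], hξ₀.2⟩
  have hξ : (0:ℝ) < ξ₀ := hξ₀.1
  set l0 := lstar ξ₀ with hl0
  have ha : (0:ℝ) < 1 + l0 := by linarith [(hrange ξ₀ hmem).1]
  have hs₀ : (0:ℝ) < (1 + l0)/ξ₀ := by positivity
  have hGs : Gfn ((1 + l0)/ξ₀) = Real.sqrt Real.pi * ξ₀ := Gfn_id lstar hrange hzero ξ₀ hξ₀
  have hl0ne : l0 ≠ 0 := by
    intro h
    have hlt := Gfn_lt hs₀
    rw [hGs, h] at hlt
    have hx : Real.sqrt Real.pi / ((1 + (0:ℝ))/ξ₀) = Real.sqrt Real.pi * ξ₀ := by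
      field_simp
      norm_num
    rw [hx] at hlt
    exact lt_irrefl _ hlt
  have hdAt : DifferentiableAt ℝ lstar ξ₀ :=
    (hdiff ξ₀ hmem).differentiableAt (isOpen_Ioo.mem_nhds hmem)
  have hL := hdAt.hasDerivAt
  set L := deriv lstar ξ₀ with hLdef
  have hinner : HasDerivAt (fun ξ => (1 + lstar ξ)/ξ)
      (((0 + L) * ξ₀ - (1 + l0) * 1)/ξ₀^2) ξ₀ :=
    ((hasDerivAt_const ξ₀ (1:ℝ)).add hL).div (hasDerivAt_id ξ₀) hξ.ne'
  have hcomp : HasDerivAt (fun ξ => Gfn ((1 + lstar ξ)/ξ))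
      ((2*((1 + l0)/ξ₀)*Gfn ((1 + l0)/ξ₀) - 2*Real.sqrt Real.pi) *
        (((0 + L) * ξ₀ - (1 + l0) * 1)/ξ₀^2)) ξ₀ :=
    HasDerivAt.comp (h := fun ξ => (1 + lstar ξ)/ξ) (h₂ := Gfn) ξ₀
      (Gfn_hasDeriv hs₀) hinner
  have hev : (fun ξ => Real.sqrt Real.pi * ξ) =ᶠ[nhds ξ₀]
      (fun ξ => Gfn ((1 + lstar ξ)/ξ)) := by
    filter_upwards [isOpen_Ioo.mem_nhds hξ₀] with ξ hξ'
    exact (Gfn_id lstar hrange hzero ξ hξ').symm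
  have hd2 : HasDerivAt (fun ξ => Real.sqrt Real.pi * ξ)
      ((2*((1 + l0)/ξ₀)*Gfn ((1 + l0)/ξ₀) - 2*Real.sqrt Real.pi) *
        (((0 + L) * ξ₀ - (1 + l0) * 1)/ξ₀^2)) ξ₀ :=
    hcomp.congr_of_eventuallyEq hev
  have hd3 : HasDerivAt (fun ξ => Real.sqrt Real.pi * ξ) (Real.sqrt Real.pi) ξ₀ := by
    simpa using (hasDerivAt_id ξ₀).const_mul (Real.sqrt Real.pi)
  have heq := hd2.unique hd3
  rw [hGs] at heq
  have hπne := hπ.ne'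
  field_simp at heq ⊢
  nlinarith [heq, sq_nonneg ξ₀]

lemma omg_neg (l ξ : ℝ) : omg l (-ξ) = omg l ξ := by
  simp only [omg, mul_neg, neg_sq]

/-- the smooth function λ* : (-√π,√π) → (-1,0] defined
implicitly by ω(λ*(ξ),ξ) = 0 (with λ*(0) = 0) satisfies the singular ODE
dλ*/dξ = ξ/(2λ*) + λ*/ξ + 1/ξ for ξ ≠ 0. -/
theorem stmt16 (lstar : ℝ → ℝ)
    (hdiff : DifferentiableOn ℝ lstar
      (Set.Ioo (-Real.sqrt Real.pi) (Real.sqrt Real.pi)))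
    (hrange : ∀ ξ ∈ Set.Ioo (-Real.sqrt Real.pi) (Real.sqrt Real.pi),
      lstar ξ ∈ Set.Ioc (-1 : ℝ) 0)
    (hzero : ∀ ξ ∈ Set.Ioo (-Real.sqrt Real.pi) (Real.sqrt Real.pi),
      omg (lstar ξ) ξ = 0)
    (h0 : lstar 0 = 0) :
    ∀ ξ ∈ Set.Ioo (-Real.sqrt Real.pi) (Real.sqrt Real.pi), ξ ≠ 0 →
      deriv lstar ξ = ξ / (2 * lstar ξ) + lstar ξ / ξ + 1 / ξ := by
  intro ξ hmem hne
  rcases hne.lt_or_gt with hneg | hpos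
  · -- ξ < 0 : apply key_pos to lstar ∘ neg at -ξ
    set m : ℝ → ℝ := fun x => lstar (-x) with hm
    have hmapsTo : Set.MapsTo (fun x : ℝ => -x)
        (Set.Ioo (-Real.sqrt Real.pi) (Real.sqrt Real.pi))
        (Set.Ioo (-Real.sqrt Real.pi) (Real.sqrt Real.pi)) := by
      intro x hx
      simp only [Set.mem_Ioo] at hx ⊢
      exact ⟨by linarith [hx.2], by linarith [hx.1]⟩
    have hd2 : DifferentiableOn ℝ m
        (Set.Ioo (-Real.sqrt Real.pi) (Real.sqrt Real.pi)) :=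
      hdiff.comp (differentiable_neg.differentiableOn) hmapsTo
    have hr2 : ∀ x ∈ Set.Ioo (-Real.sqrt Real.pi) (Real.sqrt Real.pi),
        m x ∈ Set.Ioc (-1 : ℝ) 0 := fun x hx => hrange (-x) (hmapsTo hx)
    have hz2 : ∀ x ∈ Set.Ioo (-Real.sqrt Real.pi) (Real.sqrt Real.pi),
        omg (m x) x = 0 := by
      intro x hx
      have := hzero (-x) (hmapsTo hx)
      rwa [omg_neg] at this
    have hkey := key_pos m hd2 hr2 hz2 (-ξ)
      ⟨by linarith, by linarith [hmem.1]⟩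
    have hdAt : DifferentiableAt ℝ lstar ξ :=
      (hdiff ξ hmem).differentiableAt (isOpen_Ioo.mem_nhds hmem)
    have hL := hdAt.hasDerivAt
    have hL' : HasDerivAt lstar (deriv lstar ξ) (-(-ξ)) := by rw [neg_neg]; exact hL
    have hmderiv : HasDerivAt m (deriv lstar ξ * (-1)) (-ξ) :=
      HasDerivAt.comp (h := fun x : ℝ => -x) (-ξ) hL' (hasDerivAt_neg (-ξ))
    rw [hmderiv.deriv] at hkey
    have hmval : m (-ξ) = lstar ξ := by simp [hm]
    rw [hmval] at hkey
    have e1 : (-ξ) / (2 * lstar ξ) = -(ξ / (2 * lstar ξ)) := neg_div _ _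
    have e2 : lstar ξ / (-ξ) = -(lstar ξ / ξ) := by rw [div_neg]
    have e3 : (1:ℝ) / (-ξ) = -(1 / ξ) := by rw [div_neg]
    rw [e1, e2, e3] at hkey
    linarith
  · exact key_pos lstar hdiff hrange hzero ξ ⟨hpos, hmem.2⟩
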